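/- arXiv:2307.02436 — 2 statements merged into one kernel-verified Lean document; each statement's English description precedes it below -/
import Mathlib

section
/- For any nonzero real number a, the sum over nonzero integers n of Δ̂(an)² is strictly less than 1/|a|, where Δ̂(x) = 1 for x = 0 and Δ̂(x) = sin²(πx)/(π²x²) for x ≠ 0. -/
open Real

/-- Fourier transform of the tent function `max (1 - |x|) 0`. -/
noncomputable def tentHat (x : ℝ) : ℝ :=
  if x = 0 then 1 else (Real.sin (π * x)) ^ 2 / (π ^ 2 * x ^ 2)

theorem bern2 (x : ℝ) : (Polynomial.aeval x) (Polynomial.bernoulli 2)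
    = x^2 - x + 1/6 := by
  simp [Polynomial.bernoulli_def, Finset.sum_range_succ, bernoulli_zero, bernoulli_one,
    _root_.bernoulli, bernoulli'_two]
  ring

theorem sinsq_sum {x : ℝ} (hx : x ∈ Set.Icc (0:ℝ) 1) :
    HasSum (fun n : ℕ => Real.sin (π * x * n) ^ 2 / (n:ℝ)^2) (π^2 * (x - x^2) / 2) := by
  have h1 := hasSum_one_div_nat_pow_mul_cos one_ne_zero hx
  have h2 := (hasSum_zeta_two.div_const 2).sub (h1.div_const 2)
  convert h2 using 1
  · rfl
  · funext n
    rw [show (2:ℝ) * π * n * x = 2 * (π * x * n) by ring, Real.sin_sq_eq_half_sub]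
    ring
  · norm_num [Nat.factorial, bern2]
    ring

theorem sum_tentHat_sq_lt (a : ℝ) (ha : a ≠ 0) :
    ∑' n : {n : ℤ // n ≠ 0}, (tentHat (a * ((n : ℤ) : ℝ))) ^ 2 < 1 / |a| := by
  set b := |a| with hb_def
  have hb : 0 < b := abs_pos.mpr ha
  set f := Int.fract b with hf_def
  have hf0 : 0 ≤ f := Int.fract_nonneg b
  have hf1 : f < 1 := Int.fract_lt_one b
  have hfb : f ≤ b := by
    have h0 : (0:ℝ) ≤ (⌊b⌋ : ℝ) := by
      exact_mod_cast Int.floor_nonneg.mpr hb.le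
    rw [hf_def, Int.fract]
    linarith
  -- key: sin (π a n)² = sin (π f n)² for integer n
  have hsin : ∀ n : ℤ, Real.sin (π * a * n) ^ 2 = Real.sin (π * f * n) ^ 2 := by
    intro n
    have hab : Real.sin (π * a * n) ^ 2 = Real.sin (π * b * n) ^ 2 := by
      rcases abs_cases a with ⟨h, _⟩ | ⟨h, _⟩
      · rw [hb_def, h]
      · rw [hb_def, h, show π * -a * n = -(π * a * n) by ring, Real.sin_neg]
        ring
    rw [hab, show π * b * n = π * f * n + ((⌊b⌋ * n : ℤ) : ℝ) * π by
        rw [hf_def, Int.fract]; push_cast; ring,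
      Real.sin_add_int_mul_pi]
    rw [mul_pow]
    have : ((-1:ℝ) ^ (⌊b⌋ * n)) ^ 2 = 1 := by
      rw [sq, ← zpow_add₀ (by norm_num : (-1:ℝ) ≠ 0)]
      exact Even.neg_one_zpow ⟨⌊b⌋ * n, rfl⟩
    rw [this, one_mul]
  -- the dominating function
  set g : ℤ → ℝ := fun n => Real.sin (π * f * n) ^ 2 / (π ^ 2 * a ^ 2 * (n:ℝ) ^ 2) with hg_def
  set S : ℝ := (f - f ^ 2) / (2 * a ^ 2) with hS_def
  have hSnat : HasSum (fun n : ℕ => g n) S := by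
    have := (sinsq_sum ⟨hf0, hf1.le⟩).div_const (π ^ 2 * a ^ 2)
    convert this using 1
    · rfl
    · funext n
      simp only [hg_def]
      push_cast
      ring
    · rw [hS_def]
      have hπ : (π:ℝ) ≠ 0 := Real.pi_ne_zero
      field_simp
  have hgeven : ∀ n : ℤ, g (-n) = g n := by
    intro n
    simp only [hg_def]
    rw [show π * f * ((-n : ℤ) : ℝ) = -(π * f * n) by push_cast; ring, Real.sin_neg]
    push_cast
    ring
  have hg0 : g 0 = 0 := by simp [hg_def]
  have hSneg : HasSum (fun n : ℕ => g (-(n + 1))) S := by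
    have h1 : HasSum (fun n : ℕ => g (n + 1)) S := by
      have := (hasSum_nat_add_iff' 1).mpr hSnat
      simpa [hg0] using this
    refine h1.congr_fun fun n => ?_
    rw [← hgeven (n + 1)]
  have hZ : HasSum g (S + S) := hSnat.of_nat_of_neg_add_one hSneg
  have hsub : HasSum (fun n : {n : ℤ // n ≠ 0} => g n) (S + S) := by
    refine (hasSum_subtype_iff_of_support_subset ?_).mpr hZ
    intro n hn
    simp only [Function.mem_support] at hn
    intro h0
    exact hn (by rw [h0] at *; exact hg0)
  -- pointwise bound
  have hle : ∀ n : {n : ℤ // n ≠ 0}, (tentHat (a * ((n : ℤ) : ℝ))) ^ 2 ≤ g n := by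
    rintro ⟨n, hn⟩
    have hn' : ((n : ℤ) : ℝ) ≠ 0 := Int.cast_ne_zero.mpr hn
    have han : a * (n : ℝ) ≠ 0 := mul_ne_zero ha hn'
    have hteq : tentHat (a * (n : ℝ)) = g n := by
      rw [tentHat, if_neg han, hg_def]
      simp only
      rw [show π * (a * (n:ℝ)) = π * a * n by ring, hsin n]
      ring_nf
    rw [hteq]
    have hd : 0 < π ^ 2 * a ^ 2 * (n:ℝ) ^ 2 := by positivity
    have hgnn : 0 ≤ g n := by
      rw [hg_def]; positivity
    have hg1 : g n ≤ 1 := by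
      rw [hg_def]
      rw [div_le_one hd]
      have h1 : Real.sin (π * f * n) ^ 2 ≤ (π * f * n) ^ 2 := Real.sin_sq_le_sq
      have h2 : f ^ 2 ≤ a ^ 2 := by
        rw [← sq_abs a]
        exact pow_le_pow_left₀ hf0 hfb 2
      nlinarith [sq_nonneg (π * (n:ℝ))]
    nlinarith
  have hsumm : Summable fun n : {n : ℤ // n ≠ 0} => (tentHat (a * ((n : ℤ) : ℝ))) ^ 2 :=
    Summable.of_nonneg_of_le (fun n => sq_nonneg _) hle hsub.summable
  have hmain : ∑' n : {n : ℤ // n ≠ 0}, (tentHat (a * ((n : ℤ) : ℝ))) ^ 2 ≤ S + S :=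
    hsub.tsum_eq ▸ Summable.tsum_le_tsum hle hsumm hsub.summable
  refine lt_of_le_of_lt hmain ?_
  have hSS : S + S = (f - f ^ 2) / a ^ 2 := by rw [hS_def]; ring
  rw [hSS, div_lt_div_iff₀ (by positivity) hb, ← sq_abs a, ← hb_def]
  rcases hf0.eq_or_lt with h | h
  · nlinarith
  · nlinarith [mul_nonneg hb.le (sub_nonneg.2 hfb), mul_pos hb (mul_pos h h)]
end

section
/- Let w_r, w_s be nonzero integers, L, N > 0 reals, and let d = gcd(w_r, w_s). Then (L/N) Σ_{n₁, n₂ ≠ 0, n₁w_r = n₂w_s} Δ̂(Ln₁/N) Δ̂(Ln₂/N) < d / √(|w_r w_s|), where Δ̂(0) = 1 and Δ̂(x) = sin²(πx)/(π²x²) for x ≠ 0. -/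
open Real

/-- If `f 0 = 0` and `f` has nonneg derivative on `[0,∞)`, then `f x ≥ 0` for `x ≥ 0`. -/
lemma nonneg_of_deriv {f f' : ℝ → ℝ} (hd : ∀ x, HasDerivAt f (f' x) x)
    (h0 : f 0 = 0) (h' : ∀ x, 0 ≤ x → 0 ≤ f' x) {x : ℝ} (hx : 0 ≤ x) : 0 ≤ f x := by
  have hmono : MonotoneOn f (Set.Ici (0:ℝ)) := by
    apply monotoneOn_of_deriv_nonneg (convex_Ici 0)
    · exact fun y _ => (hd y).continuousAt.continuousWithinAt
    · exact fun y _ => (hd y).differentiableAt.differentiableWithinAt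
    · intro y hy
      rw [(hd y).deriv]
      exact h' y (le_of_lt (by simpa using hy))
  calc (0:ℝ) = f 0 := h0.symm
  _ ≤ f x := hmono (by simp) (by simpa using hx) hx

lemma sin_ge_aux {x : ℝ} (hx : 0 ≤ x) : x - x^3/6 ≤ sin x := by
  have := nonneg_of_deriv (f := fun x => sin x - (x - x^3/6))
    (f' := fun x => cos x - (1 - x^2/2)) (fun y => by
      exact ((hasDerivAt_sin y).sub (((hasDerivAt_id y).sub
        (((hasDerivAt_pow 3 y).div_const 6))).congr_deriv (by ring)))) (by simp)
    (fun y _ => by nlinarith [Real.one_sub_sq_div_two_le_cos (x := y)]) hx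
  linarith

lemma cos_le_aux (x : ℝ) : cos x ≤ 1 - x^2/2 + x^4/24 := by
  rcases le_total 0 x with h | h
  · have := nonneg_of_deriv (f := fun x => (1 - x^2/2 + x^4/24) - cos x)
      (f' := fun x => (x^3/6 - x) + sin x) (fun y => by
        have h1 : HasDerivAt (fun x : ℝ => 1 - x^2/2 + x^4/24) (y^3/6 - y) y := by
          exact (((hasDerivAt_const y (1:ℝ)).sub ((hasDerivAt_pow 2 y).div_const 2)).add
            ((hasDerivAt_pow 4 y).div_const 24)).congr_deriv (by ring)
        exact (h1.sub (hasDerivAt_cos y)).congr_deriv (by ring)) (by simp)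
      (fun y hy => by nlinarith [sin_ge_aux hy]) h
    linarith
  · have := nonneg_of_deriv (f := fun x => (1 - x^2/2 + x^4/24) - cos x)
      (f' := fun x => (x^3/6 - x) + sin x) (fun y => by
        have h1 : HasDerivAt (fun x : ℝ => 1 - x^2/2 + x^4/24) (y^3/6 - y) y := by
          exact (((hasDerivAt_const y (1:ℝ)).sub ((hasDerivAt_pow 2 y).div_const 2)).add
            ((hasDerivAt_pow 4 y).div_const 24)).congr_deriv (by ring)
        exact (h1.sub (hasDerivAt_cos y)).congr_deriv (by ring))
      (h0 := by simp) (fun y hy => by nlinarith [sin_ge_aux hy]) (x := -x) (by linarith)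
    simp only [Real.cos_neg] at this
    nlinarith

lemma sin_le_aux {x : ℝ} (hx : 0 ≤ x) : sin x ≤ x - x^3/6 + x^5/120 := by
  have := nonneg_of_deriv (f := fun x => (x - x^3/6 + x^5/120) - sin x)
    (f' := fun x => (1 - x^2/2 + x^4/24) - cos x) (fun y => by
      have h1 : HasDerivAt (fun x : ℝ => x - x^3/6 + x^5/120) (1 - y^2/2 + y^4/24) y := by
        exact (((hasDerivAt_id y).sub ((hasDerivAt_pow 3 y).div_const 6)).add
          ((hasDerivAt_pow 5 y).div_const 120)).congr_deriv (by ring)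
      exact (h1.sub (hasDerivAt_sin y)) ) (by simp)
    (fun y _ => by linarith [cos_le_aux y]) hx
  linarith

/-- Key inequality: `sin² u · (4 + u²) ≤ 4 u²`. -/
lemma key_ineq (u : ℝ) : sin u ^ 2 * (4 + u^2) ≤ 4 * u^2 := by
  wlog hu : 0 ≤ u with H
  · have := H (-u) (by linarith [lt_of_not_ge hu])
    simpa using this
  rcases le_total u 2 with h2 | h2
  · have hs0 : 0 ≤ sin u := Real.sin_nonneg_of_nonneg_of_le_pi hu (by nlinarith [Real.pi_gt_three])
    have hs : sin u ≤ u - u^3/6 + u^5/120 := sin_le_aux hu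
    have hsq : sin u ^2 ≤ (u - u^3/6 + u^5/120)^2 := by nlinarith
    set s := u^2 with hsdef
    have h0 : 0 ≤ s := sq_nonneg u
    have h4 : s ≤ 4 := by nlinarith
    have hE : -1/3 - (7/45)*s + s^2/30 - s^3/400 + s^4/14400 ≤ 0 := by
      nlinarith [mul_nonneg h0 h0, mul_nonneg (mul_nonneg h0 h0) h0, sq_nonneg (s-2),
        mul_nonneg (mul_nonneg h0 h0) (sub_nonneg.2 h4), mul_nonneg h0 (sub_nonneg.2 h4),
        sq_nonneg (s*(4-s))]
    have h5 : s * (-1/3 - (7/45)*s + s^2/30 - s^3/400 + s^4/14400) ≤ 0 :=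
      mul_nonpos_iff.2 (Or.inl ⟨h0, hE⟩)
    have hq : (1 - s/6 + s^2/120)^2 * (4+s) ≤ 4 := by nlinarith [h5]
    have hfin : (u - u^3/6 + u^5/120)^2 * (4 + u^2) ≤ 4 * u^2 := by
      have := mul_le_mul_of_nonneg_left hq h0
      calc (u - u^3/6 + u^5/120)^2 * (4 + u^2)
          = u^2 * ((1 - s/6 + s^2/120)^2 * (4+s)) := by rw [hsdef]; ring
        _ ≤ u^2 * 4 := this
        _ = 4 * u^2 := by ring
    nlinarith [hfin]
  · have h1 : sin u ^ 2 ≤ 1 := Real.sin_sq_le_one u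
    nlinarith [sq_nonneg (sin u), sq_nonneg u]

noncomputable def Gf (c t : ℝ) : ℝ := (1/c) * arctan (c*t/2) + 2*t/(4+c^2*t^2)
noncomputable def hf (c t : ℝ) : ℝ := 16/(4+c^2*t^2)^2

lemma denom_pos (c t : ℝ) : 0 < 4 + c^2*t^2 := by positivity

lemma hf_pos (c t : ℝ) : 0 < hf c t := by unfold hf; positivity

lemma hf_cont (c : ℝ) : Continuous (hf c) := by
  unfold hf; fun_prop (disch := intro x; positivity)

lemma hf_anti {c u v : ℝ} (hu : 0 ≤ u) (huv : u ≤ v) : hf c v ≤ hf c u := by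
  unfold hf
  have hA : 4+c^2*u^2 ≤ 4+c^2*v^2 := by nlinarith [mul_self_le_mul_self hu huv, sq_nonneg c]
  have hp := pow_le_pow_left₀ (le_of_lt (denom_pos c u)) hA 2
  rw [div_le_div_iff₀ (by positivity) (by positivity)]
  nlinarith

lemma hasDerivAt_Gf {c : ℝ} (hc : c ≠ 0) (t : ℝ) : HasDerivAt (Gf c) (hf c t) t := by
  have hlin : HasDerivAt (fun t : ℝ => c*t/2) (c/2) t := by
    simpa using ((hasDerivAt_id t).const_mul c).div_const 2
  have harc : HasDerivAt (fun t : ℝ => arctan (c*t/2)) (1/(1+(c*t/2)^2) * (c/2)) t :=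
    hlin.arctan
  have h1 : HasDerivAt (fun t : ℝ => (1/c) * arctan (c*t/2)) ((1/c) * (1/(1+(c*t/2)^2) * (c/2))) t :=
    harc.const_mul (1/c)
  have hden : HasDerivAt (fun x : ℝ => 4 + c^2*x^2) (2*c^2*t) t :=
    (((hasDerivAt_pow 2 t).const_mul (c^2)).const_add 4).congr_deriv (by push_cast; ring)
  have hnum : HasDerivAt (fun x : ℝ => 2*x) (2:ℝ) t := by
    simpa using (hasDerivAt_id t).const_mul 2
  have h2 : HasDerivAt (fun t : ℝ => 2*t/(4+c^2*t^2))
      ((2*(4+c^2*t^2) - 2*t*(2*c^2*t))/(4+c^2*t^2)^2) t :=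
    hnum.div hden (denom_pos c t).ne'
  refine (h1.add h2).congr_deriv ?_
  unfold hf
  have h3 := (denom_pos c t).ne'
  have h4 : (1:ℝ)+(c*t/2)^2 ≠ 0 := by positivity
  field_simp
  ring

lemma arctan_ge {x : ℝ} (hx : 0 ≤ x) : x/(1+x^2) ≤ arctan x := by
  have := nonneg_of_deriv (f := fun x => arctan x - x/(1+x^2))
    (f' := fun x => 2*x^2/(1+x^2)^2) (fun y => by
      have hden : (0:ℝ) < 1 + y^2 := by positivity
      have hd : HasDerivAt (fun x : ℝ => 1 + x^2) (2*y) y :=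
        ((hasDerivAt_pow 2 y).const_add 1).congr_deriv (by push_cast; ring)
      have h2 : HasDerivAt (fun x : ℝ => x/(1+x^2)) ((1*(1+y^2) - y*(2*y))/(1+y^2)^2) y :=
        (hasDerivAt_id y).div hd hden.ne'
      refine ((Real.hasDerivAt_arctan y).sub h2).congr_deriv ?_
      field_simp
      ring) (by simp)
    (fun y _ => by positivity) hx
  linarith

lemma Gf_le {c : ℝ} (hc : 0 < c) {t : ℝ} (ht : 0 ≤ t) : Gf c t ≤ π/(2*c) := by
  rcases eq_or_lt_of_le ht with h | h
  · rw [Gf, ← h]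
    simp
    positivity
  · have hy : 0 < c*t/2 := by positivity
    have harc := Real.arctan_inv_of_pos hy
    have hge := arctan_ge (le_of_lt (inv_pos.2 hy))
    have hrw : (c*t/2)⁻¹/(1+((c*t/2)⁻¹)^2) = (c*t/2)/(1+(c*t/2)^2) := by
      rw [div_eq_div_iff (by positivity) (by positivity)]
      field_simp
      ring
    rw [hrw, harc] at hge
    have hG : Gf c t = (1/c) * (arctan (c*t/2) + (c*t/2)/(1+(c*t/2)^2)) := by
      unfold Gf
      have h3 := (denom_pos c t).ne'
      have h4 : (1:ℝ)+(c*t/2)^2 ≠ 0 := by positivity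
      field_simp
      ring
    rw [hG, show π/(2*c) = (1/c)*(π/2) by ring]
    have hmul := mul_le_mul_of_nonneg_left
      (show arctan (c*t/2) + (c*t/2)/(1+(c*t/2)^2) ≤ π/2 by linarith)
      (show (0:ℝ) ≤ 1/c by positivity)
    linarith

lemma Gf_zero (c : ℝ) : Gf c 0 = 0 := by simp [Gf]

lemma step_int {c : ℝ} (hc : 0 < c) {x y : ℝ} (h0 : 0 ≤ x) (hxy : x < y) :
    (y - x) * hf c y ≤ Gf c y - Gf c x := by
  have hFTC : ∫ t in x..y, hf c t = Gf c y - Gf c x :=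
    intervalIntegral.integral_eq_sub_of_hasDerivAt
      (fun t _ => hasDerivAt_Gf hc.ne' t) ((hf_cont c).intervalIntegrable x y)
  have hconst : ∫ _t in x..y, hf c y = (y - x) * hf c y := by
    simp [intervalIntegral.integral_const, smul_eq_mul]
  rw [← hFTC, ← hconst]
  apply intervalIntegral.integral_mono_on hxy.le
    (intervalIntegrable_const) ((hf_cont c).intervalIntegrable x y)
  intro t ht
  exact hf_anti (le_trans h0 ht.1) ht.2

lemma step_strict {c : ℝ} (hc : 0 < c) : hf c 1 < Gf c 1 := by
  have hFTC : ∫ t in (0:ℝ)..1, hf c t = Gf c 1 - Gf c 0 :=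
    intervalIntegral.integral_eq_sub_of_hasDerivAt
      (fun t _ => hasDerivAt_Gf hc.ne' t) ((hf_cont c).intervalIntegrable 0 1)
  have hlt : ∫ _t in (0:ℝ)..1, hf c 1 < ∫ t in (0:ℝ)..1, hf c t := by
    apply intervalIntegral.integral_lt_integral_of_continuousOn_of_le_of_exists_lt
      one_pos continuousOn_const ((hf_cont c).continuousOn)
    · exact fun t ht => hf_anti (le_of_lt ht.1) ht.2
    · refine ⟨0, by norm_num, ?_⟩
      unfold hf
      rw [div_lt_div_iff₀ (by positivity) (by positivity)]
      nlinarith [mul_pos (mul_pos hc hc) (mul_pos hc hc)]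
  have hconst : ∫ _t in (0:ℝ)..1, hf c 1 = hf c 1 := by
    simp [intervalIntegral.integral_const, smul_eq_mul]
  rw [hconst] at hlt
  rw [hFTC, Gf_zero] at hlt
  linarith

lemma partial_bound {c : ℝ} (hc : 0 < c) (N : ℕ) :
    ∑ k ∈ Finset.range N, hf c (k+1) ≤ π/(2*c) - (Gf c 1 - hf c 1) := by
  have hdelta : 0 < Gf c 1 - hf c 1 := sub_pos.2 (step_strict hc)
  cases N with
  | zero =>
    simp only [Finset.range_zero, Finset.sum_empty]
    have h1 : Gf c 1 ≤ π/(2*c) := Gf_le hc zero_le_one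
    have := (hf_pos c 1).le
    linarith
  | succ M =>
    rw [Finset.sum_range_succ']
    have htel : ∑ k ∈ Finset.range M, hf c ((k:ℝ)+1+1) ≤ Gf c (M+1) - Gf c 1 := by
      have : ∀ k ∈ Finset.range M, hf c ((k:ℝ)+1+1) ≤ Gf c ((k:ℝ)+1+1) - Gf c ((k:ℝ)+1) := by
        intro k _
        have := step_int hc (x := (k:ℝ)+1) (y := (k:ℝ)+1+1) (by positivity) (by linarith)
        simpa using this
      calc ∑ k ∈ Finset.range M, hf c ((k:ℝ)+1+1)
          ≤ ∑ k ∈ Finset.range M, (Gf c ((k:ℝ)+1+1) - Gf c ((k:ℝ)+1)) :=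
            Finset.sum_le_sum this
        _ = Gf c (M+1) - Gf c 1 := by
            have := Finset.sum_range_sub (f := fun k : ℕ => Gf c ((k:ℝ)+1)) M
            simpa using this
    have hlast : Gf c ((M:ℝ)+1) ≤ π/(2*c) := Gf_le hc (by positivity)
    have hcast : ∀ k : ℕ, hf c ((k:ℝ)+1+1) = hf c (((k+1:ℕ):ℝ)+1) := by
      intro k; push_cast; ring_nf
    simp only [← hcast] at *
    push_cast
    linarith [htel]

lemma nat_sum_lt {c : ℝ} (hc : 0 < c) :
    Summable (fun k : ℕ => hf c (k+1)) ∧ ∑' k : ℕ, hf c (k+1) < π/(2*c) := by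
  have hb := partial_bound hc
  have h01 : 0 < Gf c 1 - hf c 1 := sub_pos.2 (step_strict hc)
  have hsum : Summable (fun k : ℕ => hf c (k+1)) :=
    summable_of_sum_range_le (c := π/(2*c) - (Gf c 1 - hf c 1)) (fun k => (hf_pos c _).le) hb
  refine ⟨hsum, lt_of_le_of_lt (Summable.tsum_le_of_sum_range_le hsum hb) (by linarith)⟩

lemma int_sum_lt {c : ℝ} (hc : 0 < c) :
    Summable (fun n : ℤ => if n = 0 then (0:ℝ) else hf c n) ∧
    ∑' n : ℤ, (if n = 0 then (0:ℝ) else hf c n) < π/c := by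
  obtain ⟨hsum, hlt⟩ := nat_sum_lt hc
  set S := ∑' k : ℕ, hf c (k+1) with hS
  set q : ℤ → ℝ := fun n => if n = 0 then (0:ℝ) else hf c n with hq
  have h1 : HasSum (fun k : ℕ => q k) S := by
    have h1' : HasSum (fun k : ℕ => q (k+1)) S := by
      refine hsum.hasSum.congr_fun (fun k => ?_)
      simp only [hq]
      rw [if_neg (by exact_mod_cast Nat.succ_ne_zero k)]
      push_cast
      norm_num
    have := (hasSum_nat_add_iff (f := fun k : ℕ => q k) 1).1 (by exact_mod_cast h1')
    simpa [hq] using this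
  have h2 : HasSum (fun k : ℕ => q (-(k+1))) S := by
    refine hsum.hasSum.congr_fun (fun k => ?_)
    simp only [hq]
    rw [if_neg (by omega)]
    unfold hf
    push_cast
    ring_nf
  have h3 : HasSum q (S + S) := h1.of_nat_of_neg_add_one h2
  refine ⟨h3.summable, ?_⟩
  rw [h3.tsum_eq]
  have : π/c = π/(2*c) + π/(2*c) := by field_simp; ring
  rw [this]
  exact add_lt_add hlt hlt

lemma tentHat_nonneg (x : ℝ) : 0 ≤ tentHat x := by
  unfold tentHat
  split
  · norm_num
  · positivity

lemma tentHat_le (x : ℝ) : tentHat x ≤ 4/(4+(π*x)^2) := by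
  unfold tentHat
  split
  · rename_i h
    simp [h]
  · rename_i h
    rw [div_le_div_iff₀ (by positivity) (by positivity)]
    have := key_ineq (π * x)
    nlinarith [Real.pi_pos, sq_nonneg x, sq_nonneg (π*x)]

lemma tentHat_sq_le {α : ℝ} (hα : α ≠ 0) (n : ℤ) :
    (if n = 0 then (0:ℝ) else tentHat (α*n))^2 ≤ (if n = 0 then (0:ℝ) else hf (π*|α|) n) := by
  split
  · norm_num
  · have h1 := tentHat_le (α*n)
    have h0 := tentHat_nonneg (α*n)
    have heq : 4/(4+(π*(α*n))^2) = 4/(4+(π*|α|)^2*(n:ℝ)^2) := by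
      congr 2
      rw [mul_pow, mul_pow, mul_pow, sq_abs]
      ring
    have h2 : tentHat (α*n)^2 ≤ (4/(4+(π*|α|)^2*(n:ℝ)^2))^2 := by
      rw [← heq]
      exact pow_le_pow_left₀ h0 h1 2
    calc tentHat (α*n)^2 ≤ (4/(4+(π*|α|)^2*(n:ℝ)^2))^2 := h2
      _ = hf (π*|α|) n := by rw [hf, div_pow]; norm_num
  
lemma scale_sum {α : ℝ} (hα : α ≠ 0) :
    Summable (fun n : ℤ => (if n = 0 then (0:ℝ) else tentHat (α*n))^2) ∧
    ∑' n : ℤ, (if n = 0 then (0:ℝ) else tentHat (α*n))^2 < 1/|α| := by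
  have hc : 0 < π*|α| := by positivity
  obtain ⟨hsum, hlt⟩ := int_sum_lt hc
  have hle := tentHat_sq_le hα
  have hsum2 : Summable (fun n : ℤ => (if n = 0 then (0:ℝ) else tentHat (α*n))^2) :=
    hsum.of_nonneg_of_le (fun n => by positivity) hle
  refine ⟨hsum2, lt_of_le_of_lt (Summable.tsum_le_tsum hle hsum2 hsum) ?_⟩
  have : π/(π*|α|) = 1/|α| := by
    rw [div_eq_div_iff (by positivity) (by positivity)]
    ring
  rw [← this]
  exact hlt

lemma tsum_CS {f g : ℤ → ℝ} (hf0 : ∀ n, 0 ≤ f n) (hg0 : ∀ n, 0 ≤ g n)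
    (hf : Summable (fun n => f n^2)) (hg : Summable (fun n => g n^2)) :
    Summable (fun n => f n * g n) ∧
    ∑' n, f n * g n ≤ √(∑' n, f n^2) * √(∑' n, g n^2) := by
  have hsum : Summable (fun n => f n * g n) := by
    refine ((hf.add hg).div_const 2).of_nonneg_of_le
      (fun n => mul_nonneg (hf0 n) (hg0 n)) (fun n => ?_)
    have h := sq_nonneg (f n - g n)
    nlinarith
  refine ⟨hsum, Summable.tsum_le_of_sum_le hsum (fun s => ?_)⟩
  refine (Real.sum_mul_le_sqrt_mul_sqrt s f g).trans ?_
  have h1 : ∑ i ∈ s, f i^2 ≤ ∑' n, f n^2 := Summable.sum_le_tsum s (fun n _ => sq_nonneg _) hf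
  have h2 : ∑ i ∈ s, g i^2 ≤ ∑' n, g n^2 := Summable.sum_le_tsum s (fun n _ => sq_nonneg _) hg
  exact mul_le_mul (Real.sqrt_le_sqrt h1) (Real.sqrt_le_sqrt h2)
    (Real.sqrt_nonneg _) (Real.sqrt_nonneg _)

theorem gcd_sum_bound (wr ws : ℤ) (hr : wr ≠ 0) (hs : ws ≠ 0) (L N : ℝ)
    (hL : 0 < L) (hN : 0 < N) :
    (L / N) * ∑' p : {p : ℤ × ℤ // p.1 ≠ 0 ∧ p.2 ≠ 0 ∧ p.1 * wr = p.2 * ws},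
        tentHat (L * ((p : ℤ × ℤ).1 : ℝ) / N) * tentHat (L * ((p : ℤ × ℤ).2 : ℝ) / N)
      < (Int.gcd wr ws : ℝ) / Real.sqrt |((wr * ws : ℤ) : ℝ)| := by
  set d : ℕ := Int.gcd wr ws with hd
  have hd0 : 0 < d := Int.gcd_pos_of_ne_zero_left ws hr
  have hdz : (d:ℤ) ≠ 0 := by exact_mod_cast hd0.ne'
  set r : ℤ := wr / d with hrdef
  set s : ℤ := ws / d with hsdef
  have hwr : wr = d * r := by
    rw [hrdef, Int.mul_ediv_cancel' (Int.gcd_dvd_left wr ws)]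
  have hws : ws = d * s := by
    rw [hsdef, Int.mul_ediv_cancel' (Int.gcd_dvd_right wr ws)]
  have hr0 : r ≠ 0 := fun h => hr (by rw [hwr, h, mul_zero])
  have hs0 : s ≠ 0 := fun h => hs (by rw [hws, h, mul_zero])
  have hcop : Int.gcd r s = 1 := by
    rw [hrdef, hsdef, hd]
    exact Int.gcd_div_gcd_div_gcd (Int.gcd_pos_of_ne_zero_left ws hr)
  -- the parametrizing equivalence
  have hsdvd : ∀ p : ℤ × ℤ, p.1 ≠ 0 → p.2 ≠ 0 → p.1 * wr = p.2 * ws → s ∣ p.1 := by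
    intro p h1 h2 h3
    have h4 : p.1 * r = p.2 * s := by
      have : p.1 * (d * r) = p.2 * (d * s) := by rw [← hwr, ← hws]; exact h3
      have h5 : d * (p.1 * r) = d * (p.2 * s) := by ring_nf; ring_nf at this; linarith [this]
      exact mul_left_cancel₀ hdz h5
    have h6 : s ∣ p.1 * r := ⟨p.2, by linarith [h4]⟩
    have h7 : Int.gcd s r = 1 := by rwa [Int.gcd_comm]
    exact Int.dvd_of_dvd_mul_left_of_gcd_one h6 h7
  let e : {n : ℤ // n ≠ 0} ≃ {p : ℤ × ℤ // p.1 ≠ 0 ∧ p.2 ≠ 0 ∧ p.1 * wr = p.2 * ws} :=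
  { toFun := fun n => ⟨(n.1 * s, n.1 * r),
      mul_ne_zero n.2 hs0, mul_ne_zero n.2 hr0, by rw [hwr, hws]; ring⟩
    invFun := fun p => ⟨p.1.1 / s, by
      obtain ⟨h1, h2, h3⟩ := p.2
      obtain ⟨k, hk⟩ := hsdvd p.1 h1 h2 h3
      rw [hk, Int.mul_ediv_cancel_left _ hs0]
      intro hk0
      exact h1 (by rw [hk, hk0, mul_zero])⟩
    left_inv := fun n => by
      ext
      simp only
      rw [Int.mul_ediv_cancel _ hs0]
    right_inv := fun p => by
      obtain ⟨h1, h2, h3⟩ := p.2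
      obtain ⟨k, hk⟩ := hsdvd p.1 h1 h2 h3
      ext
      · simp only [hk, Int.mul_ediv_cancel_left _ hs0]
        ring
      · simp only [hk, Int.mul_ediv_cancel_left _ hs0]
        -- need : k * r = p.1.2
        have h4 : p.1.1 * r = p.1.2 * s := by
          have : p.1.1 * (d * r) = p.1.2 * (d * s) := by rw [← hwr, ← hws]; exact h3
          have h5 : d * (p.1.1 * r) = d * (p.1.2 * s) := by ring_nf; ring_nf at this; linarith
          exact mul_left_cancel₀ hdz h5
        rw [hk] at h4
        have h6 : (k * r) * s = p.1.2 * s := by linarith [h4]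
        exact mul_right_cancel₀ hs0 h6 }
  set α : ℝ := L * (s:ℝ) / N with hαdef
  set β : ℝ := L * (r:ℝ) / N with hβdef
  have hsR : ((s:ℤ):ℝ) ≠ 0 := Int.cast_ne_zero.2 hs0
  have hrR : ((r:ℤ):ℝ) ≠ 0 := Int.cast_ne_zero.2 hr0
  have hα : α ≠ 0 := div_ne_zero (mul_ne_zero hL.ne' hsR) hN.ne'
  have hβ : β ≠ 0 := div_ne_zero (mul_ne_zero hL.ne' hrR) hN.ne'
  set f : ℤ → ℝ := fun n => if n = 0 then (0:ℝ) else tentHat (α*n) with hfdef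
  set g : ℤ → ℝ := fun n => if n = 0 then (0:ℝ) else tentHat (β*n) with hgdef
  have hf0 : ∀ n, 0 ≤ f n := fun n => by
    rw [hfdef]; dsimp only; split
    · exact le_refl 0
    · exact tentHat_nonneg _
  have hg0 : ∀ n, 0 ≤ g n := fun n => by
    rw [hgdef]; dsimp only; split
    · exact le_refl 0
    · exact tentHat_nonneg _
  obtain ⟨hfsum', hflt'⟩ := scale_sum hα
  obtain ⟨hgsum', hglt'⟩ := scale_sum hβ
  have hfsum : Summable (fun n : ℤ => f n ^ 2) := hfsum'
  have hgsum : Summable (fun n : ℤ => g n ^ 2) := hgsum'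
  have hflt : ∑' n : ℤ, f n ^ 2 < 1/|α| := hflt'
  have hglt : ∑' n : ℤ, g n ^ 2 < 1/|β| := hglt'
  obtain ⟨hfgsum, hCS⟩ := tsum_CS hf0 hg0 hfsum hgsum
  -- step 1 : reindex the sum over pairs
  have hstep1 : ∑' p : {p : ℤ × ℤ // p.1 ≠ 0 ∧ p.2 ≠ 0 ∧ p.1 * wr = p.2 * ws},
      tentHat (L * ((p : ℤ × ℤ).1 : ℝ) / N) * tentHat (L * ((p : ℤ × ℤ).2 : ℝ) / N)
      = ∑' n : {n : ℤ // n ≠ 0}, tentHat (α * n.1) * tentHat (β * n.1) := by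
    rw [← Equiv.tsum_eq e]
    apply tsum_congr
    intro n
    have h1 : ((e n : ℤ × ℤ)).1 = n.1 * s := rfl
    have h2 : ((e n : ℤ × ℤ)).2 = n.1 * r := rfl
    rw [h1, h2]
    congr 1
    · congr 1
      push_cast
      ring
    · congr 1
      push_cast
      ring
  -- step 2 : subtype sum to full integer sum
  have hsupp : Function.support (fun n : ℤ => f n * g n) ⊆ {n : ℤ | n ≠ 0} := by
    intro m hm
    simp only [Function.mem_support] at hm
    intro hm0
    apply hm
    rw [hfdef, hgdef]
    dsimp only
    rw [if_pos hm0, zero_mul]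
  have hstep2 : ∑' n : {n : ℤ // n ≠ 0}, tentHat (α * n.1) * tentHat (β * n.1)
      = ∑' n : ℤ, f n * g n := by
    rw [← tsum_subtype_eq_of_support_subset hsupp]
    apply tsum_congr
    intro n
    rw [hfdef, hgdef]
    dsimp only
    rw [if_neg n.2, if_neg n.2]
  rw [hstep1, hstep2]
  have hTf0 : 0 ≤ ∑' n : ℤ, f n ^2 := tsum_nonneg (fun n => sq_nonneg _)
  have hTg0 : 0 ≤ ∑' n : ℤ, g n ^2 := tsum_nonneg (fun n => sq_nonneg _)
  have hAlt : ∑' n : ℤ, f n * g n < √(1/(abs α)) * √(1/(abs β)) :=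
    lt_of_le_of_lt hCS (mul_lt_mul'' (Real.sqrt_lt_sqrt hTf0 hflt)
      (Real.sqrt_lt_sqrt hTg0 hglt) (Real.sqrt_nonneg _) (Real.sqrt_nonneg _))
  have hprod : √(1/(abs α)) * √(1/(abs β)) = √(1/(abs α * abs β)) := by
    have h12 : (1:ℝ)/(abs α) * (1/(abs β)) = 1/(abs α * abs β) := by
      rw [div_mul_div_comm, one_mul]
    rw [← Real.sqrt_mul (by positivity) (1/(abs β)), h12]
  have habs : abs α * abs β = (L/N)^2 * (abs ((s:ℤ):ℝ) * abs ((r:ℤ):ℝ)) := by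
    rw [hαdef, hβdef, abs_div, abs_div, abs_mul, abs_mul, abs_of_pos hL, abs_of_pos hN]
    ring
  have hXval : abs ((wr * ws : ℤ):ℝ) = (d:ℝ)^2 * (abs ((r:ℤ):ℝ) * abs ((s:ℤ):ℝ)) := by
    rw [hwr, hws]
    push_cast
    rw [show ((d:ℝ)*(r:ℝ))*((d:ℝ)*(s:ℝ)) = (d:ℝ)^2*((r:ℝ)*(s:ℝ)) by ring]
    rw [abs_mul, abs_mul, abs_of_nonneg (sq_nonneg (d:ℝ))]
  have hfinal : (L/N) * √(1/(abs α * abs β)) = (d:ℝ)/√(abs ((wr * ws : ℤ):ℝ)) := by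
    rw [habs, hXval]
    have e1 : √(1/((L/N)^2 * (abs ((s:ℤ):ℝ) * abs ((r:ℤ):ℝ))))
        = 1/((L/N) * √(abs ((s:ℤ):ℝ) * abs ((r:ℤ):ℝ))) := by
      rw [one_div, Real.sqrt_inv, Real.sqrt_mul (by positivity),
        Real.sqrt_sq (by positivity), one_div]
    have e2 : √((d:ℝ)^2*(abs ((r:ℤ):ℝ) * abs ((s:ℤ):ℝ)))
        = (d:ℝ)*√(abs ((r:ℤ):ℝ) * abs ((s:ℤ):ℝ)) := by
      rw [Real.sqrt_mul (by positivity), Real.sqrt_sq (by positivity)]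
    rw [e1, e2]
    have hsr0 : (0:ℝ) < √(abs ((s:ℤ):ℝ) * abs ((r:ℤ):ℝ)) := Real.sqrt_pos.2 (by
      have h1 := abs_pos.2 hsR
      have h2 := abs_pos.2 hrR
      positivity)
    have hdR : (d:ℝ) ≠ 0 := by exact_mod_cast hd0.ne'
    rw [mul_comm (abs ((r:ℤ):ℝ)) (abs ((s:ℤ):ℝ))]
    rw [div_mul_eq_mul_div, mul_one_div]
    rw [div_eq_div_iff (by positivity) (by positivity)]
    field_simp
  calc (L/N) * ∑' n : ℤ, f n * g n
      < (L/N) * (√(1/(abs α)) * √(1/(abs β))) := by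
        apply mul_lt_mul_of_pos_left hAlt (by positivity)
    _ = (L/N) * √(1/(abs α * abs β)) := by rw [hprod]
    _ = (d:ℝ)/√(abs ((wr * ws : ℤ):ℝ)) := hfinal
end
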